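/- arXiv:2111.00633 — 4 statements merged into one kernel-verified Lean document; each statement's English description precedes it below -/
import Mathlib

section
/- Let C = (S, P, μ) be a Markov chain with finite state space S. For any sequence of L states T = (s_0, s_1, …, s_{L−1}) ∈ S^L with L > |S|, there exists a sequence of L′ states T′ = (s′_0, s′_1, …, s′_{L′−1}) ∈ S^{L′} with s′_{L′−1} = s_{L−1}, L′ ≤ |S|, and p(T, C) ≤ p(T′, C). -/
open Finset

/-- The probability of a sequence of `L` states `T = (T 0, …, T (L-1))` in the Markov chain
with initial distribution `μ` and transition operator `P`:
`p(T, C) = μ(s₀) · ∏_{h=0}^{L-2} P(s_{h+1} ∣ s_h)`. -/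
noncomputable def seqProb {S : Type} (μ : S → ℝ) (P : S → S → ℝ) (L : ℕ) (T : ℕ → S) : ℝ :=
  μ (T 0) * ∏ h ∈ Finset.range (L - 1), P (T h) (T (h + 1))

/-- For any sequence of `L > |S|` states there is a sequence of at most `|S|` states, with the
same final state, whose probability in the Markov chain is at least as large. -/
theorem stmt0 {S : Type} [Fintype S]
    (μ : S → ℝ) (P : S → S → ℝ)
    (hμ0 : ∀ s, 0 ≤ μ s) (hμ1 : ∑ s, μ s = 1)
    (hP0 : ∀ s s', 0 ≤ P s s') (hP1 : ∀ s, ∑ s', P s s' = 1)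
    (L : ℕ) (hL : Fintype.card S < L) (T : ℕ → S) :
    ∃ (L' : ℕ) (T' : ℕ → S),
      1 ≤ L' ∧ L' ≤ Fintype.card S ∧ T' (L' - 1) = T (L - 1) ∧
      seqProb μ P L T ≤ seqProb μ P L' T' := by
  have hP1' : ∀ s s', P s s' ≤ 1 := by
    intro s s'
    calc P s s' ≤ ∑ t, P s t :=
          Finset.single_le_sum (fun t _ => hP0 s t) (Finset.mem_univ s')
      _ = 1 := hP1 s
  suffices h : ∀ L, 1 ≤ L → ∀ T : ℕ → S, ∃ (L' : ℕ) (T' : ℕ → S),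
      1 ≤ L' ∧ L' ≤ Fintype.card S ∧ T' (L' - 1) = T (L - 1) ∧
      seqProb μ P L T ≤ seqProb μ P L' T' by
    exact h L (by omega) T
  intro L
  induction L using Nat.strong_induction_on with
  | _ L ih =>
    intro hL1 T
    by_cases hle : L ≤ Fintype.card S
    · exact ⟨L, T, hL1, hle, rfl, le_refl _⟩
    · push_neg at hle
      obtain ⟨a, b, hab, heq⟩ :=
        Fintype.exists_ne_map_eq_of_card_lt
          (fun k : Fin (Fintype.card S + 1) => T k) (by simp)
      obtain ⟨i, j, hij, hjle, hTij⟩ : ∃ i j : ℕ, i < j ∧ j ≤ Fintype.card S ∧ T i = T j := by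
        rcases lt_or_gt_of_ne hab with h | h
        · exact ⟨a, b, h, b.is_le, heq⟩
        · exact ⟨b, a, h, a.is_le, heq.symm⟩
      set d := j - i with hd
      set L'' := L - d with hL''
      set T'' : ℕ → S := fun k => if k < i then T k else T (k + d) with hT''
      have hd1 : 1 ≤ d := by omega
      have hjL : j ≤ L - 1 := by omega
      have hL''1 : 1 ≤ L'' := by omega
      have hL''lt : L'' < L := by omega
      have hend : T'' (L'' - 1) = T (L - 1) := by
        have h1 : ¬ (L'' - 1 < i) := by omega
        simp only [hT'', if_neg h1]
        congr 1
        omega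
      have hprob : seqProb μ P L T ≤ seqProb μ P L'' T'' := by
        have hμeq : μ (T'' 0) = μ (T 0) := by
          rcases Nat.eq_zero_or_pos i with h0 | h0
          · have h2 : T'' 0 = T j := by
              simp only [hT'']
              rw [if_neg (by omega)]
              congr 1
              omega
            rw [h2, ← hTij, h0]
          · simp only [hT'', if_pos h0]
        set f : ℕ → ℝ := fun h => P (T h) (T (h + 1)) with hf
        set g : ℕ → ℝ := fun h => P (T'' h) (T'' (h + 1)) with hg
        have hsplit : ∏ h ∈ Finset.range (L - 1), f h =
            (∏ h ∈ Finset.Ico 0 i, f h) * (∏ h ∈ Finset.Ico i j, f h) *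
              (∏ h ∈ Finset.Ico j (L - 1), f h) := by
          rw [Finset.range_eq_Ico,
            ← Finset.prod_Ico_consecutive f (Nat.zero_le j) hjL,
            ← Finset.prod_Ico_consecutive f (Nat.zero_le i) (le_of_lt hij)]
        have hpart1 : ∏ h ∈ Finset.Ico 0 i, g h = ∏ h ∈ Finset.Ico 0 i, f h := by
          apply Finset.prod_congr rfl
          intro h hmem
          have hhi : h < i := (Finset.mem_Ico.mp hmem).2
          have e1 : T'' h = T h := by simp only [hT'', if_pos hhi]
          have e2 : T'' (h + 1) = T (h + 1) := by
            by_cases hc : h + 1 < i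
            · simp only [hT'', if_pos hc]
            · have hi1 : h + 1 = i := by omega
              simp only [hT'', if_neg hc]
              rw [hi1]
              have : i + d = j := by omega
              rw [this, ← hTij]
          simp only [hg, hf, e1, e2]
        have hpart2 : ∏ h ∈ Finset.Ico i (L'' - 1), g h =
            ∏ h ∈ Finset.Ico j (L - 1), f h := by
          have step1 : ∏ h ∈ Finset.Ico i (L'' - 1), g h =
              ∏ h ∈ Finset.Ico i (L'' - 1), f (h + d) := by
            apply Finset.prod_congr rfl
            intro h hmem
            have hhi : i ≤ h := (Finset.mem_Ico.mp hmem).1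
            have e1 : T'' h = T (h + d) := by
              simp only [hT'', if_neg (by omega : ¬ h < i)]
            have e2 : T'' (h + 1) = T (h + d + 1) := by
              simp only [hT'', if_neg (by omega : ¬ h + 1 < i)]
              congr 1
              omega
            simp only [hg, hf, e1, e2]
          rw [step1, Finset.prod_Ico_add' f i (L'' - 1) d,
            show i + d = j by omega, show L'' - 1 + d = L - 1 by omega]
        have hgsplit : ∏ h ∈ Finset.range (L'' - 1), g h =
            (∏ h ∈ Finset.Ico 0 i, g h) * (∏ h ∈ Finset.Ico i (L'' - 1), g h) := by
          rw [Finset.range_eq_Ico,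
            ← Finset.prod_Ico_consecutive g (Nat.zero_le i) (by omega : i ≤ L'' - 1)]
        have hA : (0:ℝ) ≤ ∏ h ∈ Finset.Ico 0 i, f h :=
          Finset.prod_nonneg fun h _ => hP0 _ _
        have hB : (0:ℝ) ≤ ∏ h ∈ Finset.Ico j (L - 1), f h :=
          Finset.prod_nonneg fun h _ => hP0 _ _
        have hM1 : ∏ h ∈ Finset.Ico i j, f h ≤ 1 :=
          Finset.prod_le_one (fun h _ => hP0 _ _) (fun h _ => hP1' _ _)
        simp only [seqProb, ← hf, ← hg, hμeq, hsplit, hgsplit, hpart1, hpart2]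
        have hμT : (0:ℝ) ≤ μ (T 0) := hμ0 _
        calc μ (T 0) * ((∏ h ∈ Finset.Ico 0 i, f h) * (∏ h ∈ Finset.Ico i j, f h) *
                (∏ h ∈ Finset.Ico j (L - 1), f h))
            = (∏ h ∈ Finset.Ico i j, f h) *
                (μ (T 0) * ((∏ h ∈ Finset.Ico 0 i, f h) *
                  (∏ h ∈ Finset.Ico j (L - 1), f h))) := by ring
          _ ≤ 1 * (μ (T 0) * ((∏ h ∈ Finset.Ico 0 i, f h) *
                (∏ h ∈ Finset.Ico j (L - 1), f h))) := by
              apply mul_le_mul_of_nonneg_right hM1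
              positivity
          _ = μ (T 0) * ((∏ h ∈ Finset.Ico 0 i, f h) *
                (∏ h ∈ Finset.Ico j (L - 1), f h)) := one_mul _
      obtain ⟨L', T', h1, h2, h3, h4⟩ := ih L'' hL''lt hL''1 T''
      exact ⟨L', T', h1, h2, by rw [h3, hend], le_trans hprob h4⟩
end

section
/- Let C = (S, P, μ) be a Markov chain with finite state space S. For any state s ∈ S, Σ_{h=0}^{4|S|−1} p_h(s, C) ≤ 4 · |S|^{4|S|} · Σ_{h=0}^{|S|−1} p_h(s, C). -/
open Finset

/-- `pReach μ P L s` is the probability `p_L(s, C)` of reaching `s` with exactly `L` steps in the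
Markov chain `C = (S, P, μ)`: the sum over all `(s_0, …, s_{L-1}) ∈ S^L` of the probability of the
sequence `(s_0, …, s_{L-1}, s)`. -/
noncomputable def pReach {S : Type} [Fintype S] (μ : S → ℝ) (P : S → S → ℝ)
    (L : ℕ) (s : S) : ℝ :=
  ∑ T : Fin L → S,
    (fun f : ℕ → S => μ (f 0) * ∏ h ∈ Finset.range L, P (f h) (f (h + 1)))
      (fun n => if h : n < L then T ⟨n, h⟩ else s)

section aux
variable {S : Type} [Fintype S] (μ : S → ℝ) (P : S → S → ℝ)

lemma pterm_nonneg (hμ0 : ∀ s, 0 ≤ μ s) (hP0 : ∀ s s', 0 ≤ P s s') (f : ℕ → S) (L : ℕ) :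
    0 ≤ μ (f 0) * ∏ h ∈ Finset.range L, P (f h) (f (h + 1)) :=
  mul_nonneg (hμ0 _) (Finset.prod_nonneg fun _ _ => hP0 _ _)

lemma pReach_nonneg (hμ0 : ∀ s, 0 ≤ μ s) (hP0 : ∀ s s', 0 ≤ P s s') (L : ℕ) (s : S) :
    0 ≤ pReach μ P L s :=
  Finset.sum_nonneg fun T _ =>
    pterm_nonneg μ P hμ0 hP0 (fun n => if h : n < L then T ⟨n, h⟩ else s) L

lemma P_le_one (hP0 : ∀ s s', 0 ≤ P s s') (hP1 : ∀ s, ∑ s', P s s' = 1) (a b : S) :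
    P a b ≤ 1 := by
  have := Finset.single_le_sum (f := fun s' => P a s') (fun i _ => hP0 a i) (Finset.mem_univ b)
  rwa [hP1 a] at this

lemma pterm_le_pReach (hμ0 : ∀ s, 0 ≤ μ s) (hP0 : ∀ s s', 0 ≤ P s s')
    (L : ℕ) (s : S) (f : ℕ → S) (hf : f L = s) :
    μ (f 0) * ∏ h ∈ Finset.range L, P (f h) (f (h + 1)) ≤ pReach μ P L s := by
  have hle := Finset.single_le_sum
    (f := fun T : Fin L → S =>
      (fun g : ℕ → S => μ (g 0) * ∏ h ∈ Finset.range L, P (g h) (g (h + 1)))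
        (fun n => if h : n < L then T ⟨n, h⟩ else s))
    (fun T _ => pterm_nonneg μ P hμ0 hP0 (fun n => if h : n < L then T ⟨n, h⟩ else s) L)
    (Finset.mem_univ (fun k : Fin L => f k))
  refine le_trans (le_of_eq ?_) hle
  simp only
  congr 1
  · by_cases h0 : 0 < L
    · rw [dif_pos h0]
    · rw [dif_neg h0]
      have : L = 0 := by omega
      rw [this] at hf
      rw [hf]
  · apply Finset.prod_congr rfl
    intro h hh
    rw [Finset.mem_range] at hh
    rw [dif_pos hh]
    by_cases h1 : h + 1 < L
    · rw [dif_pos h1]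
    · rw [dif_neg h1]
      have : h + 1 = L := by omega
      rw [this, hf]

/-- Cycle removal: a path with a repeated state can be shortened without decreasing probability. -/
lemma shrink (hμ0 : ∀ s, 0 ≤ μ s) (hP0 : ∀ s s', 0 ≤ P s s') (hP1 : ∀ s, ∑ s', P s s' = 1)
    (L i j : ℕ) (hij : i < j) (hjL : j ≤ L) (f : ℕ → S) (hfij : f i = f j) :
    ∃ L' < L, ∃ g : ℕ → S, g 0 = f 0 ∧ g L' = f L ∧
      μ (f 0) * ∏ h ∈ Finset.range L, P (f h) (f (h + 1)) ≤
        μ (g 0) * ∏ h ∈ Finset.range L', P (g h) (g (h + 1)) := by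
  set d := j - i with hd
  set L' := L - d with hL'
  set σ : ℕ → ℕ := fun m => if m < i then m else m + d with hσ
  set g : ℕ → S := fun m => f (σ m) with hg
  have hd1 : 1 ≤ d := by omega
  have hidj : i + d = j := by omega
  refine ⟨L', by omega, g, ?_, ?_, ?_⟩
  · by_cases h0 : 0 < i
    · simp [hg, hσ, h0]
    · have : i = 0 := by omega
      subst this
      simp only [hg, hσ]
      rw [if_neg (by omega)]
      rw [show 0 + d = j by omega, ← hfij]
  · simp only [hg, hσ]
    rw [if_neg (by omega), show L' + d = L by omega]
  · have hg0 : g 0 = f 0 := by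
      by_cases h0 : 0 < i
      · simp [hg, hσ, h0]
      · have : i = 0 := by omega
        subst this
        simp only [hg, hσ]
        rw [if_neg (by omega)]
        rw [show 0 + d = j by omega, ← hfij]
    rw [hg0]
    apply mul_le_mul_of_nonneg_left _ (hμ0 _)
    have himg : (Finset.range L').image σ ⊆ Finset.range L := by
      intro x hx
      simp only [Finset.mem_image, Finset.mem_range] at hx ⊢
      obtain ⟨m, hm, rfl⟩ := hx
      simp only [hσ]
      split_ifs <;> omega
    have hinj : ∀ x ∈ Finset.range L', ∀ y ∈ Finset.range L', σ x = σ y → x = y := by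
      intro x _ y _ hxy
      simp only [hσ] at hxy
      split_ifs at hxy <;> omega
    calc ∏ h ∈ Finset.range L, P (f h) (f (h + 1))
        ≤ ∏ h ∈ (Finset.range L').image σ, P (f h) (f (h + 1)) := by
          rw [← Finset.prod_sdiff himg]
          nth_rewrite 2 [← one_mul (∏ h ∈ (Finset.range L').image σ, P (f h) (f (h + 1)))]
          apply mul_le_mul_of_nonneg_right
          · exact Finset.prod_le_one (fun _ _ => hP0 _ _) (fun _ _ => P_le_one P hP0 hP1 _ _)
          · exact Finset.prod_nonneg fun _ _ => hP0 _ _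
      _ = ∏ h ∈ Finset.range L', P (f (σ h)) (f (σ h + 1)) := Finset.prod_image hinj
      _ = ∏ h ∈ Finset.range L', P (g h) (g (h + 1)) := by
          apply Finset.prod_congr rfl
          intro h _
          have h1 : g h = f (σ h) := rfl
          have h2 : g (h + 1) = f (σ h + 1) := by
            simp only [hg, hσ]
            by_cases hc1 : h + 1 < i
            · rw [if_pos hc1, if_pos (by omega)]
            · by_cases hc2 : h + 1 = i
              · rw [if_neg hc1, if_pos (by omega), show h + 1 + d = j by omega, ← hfij,
                  show h + 1 = i from hc2]
              · rw [if_neg hc1, if_neg (by omega)]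
                congr 1
                omega
          rw [h1, h2]

lemma key (hμ0 : ∀ s, 0 ≤ μ s) (hP0 : ∀ s s', 0 ≤ P s s') (hP1 : ∀ s, ∑ s', P s s' = 1)
    (s : S) : ∀ L (f : ℕ → S), f L = s →
      μ (f 0) * ∏ h ∈ Finset.range L, P (f h) (f (h + 1)) ≤
        ∑ h ∈ Finset.range (Fintype.card S), pReach μ P h s := by
  intro L
  induction L using Nat.strong_induction_on with
  | _ L IH =>
    intro f hf
    by_cases hL : L < Fintype.card S
    · calc μ (f 0) * ∏ h ∈ Finset.range L, P (f h) (f (h + 1))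
          ≤ pReach μ P L s := pterm_le_pReach μ P hμ0 hP0 L s f hf
        _ ≤ ∑ h ∈ Finset.range (Fintype.card S), pReach μ P h s :=
          Finset.single_le_sum (fun h _ => pReach_nonneg μ P hμ0 hP0 h s)
            (Finset.mem_range.mpr hL)
    · push_neg at hL
      have hcard : Fintype.card S < Fintype.card (Fin (L + 1)) := by
        rw [Fintype.card_fin]; omega
      obtain ⟨i, j, hij, hfij⟩ :=
        Fintype.exists_ne_map_eq_of_card_lt (fun k : Fin (L + 1) => f k) hcard
      have hij' : (i : ℕ) ≠ (j : ℕ) := fun h => hij (Fin.ext h)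
      rcases hij'.lt_or_gt with h | h
      · obtain ⟨L', hL'lt, g, hg0, hgL, hle⟩ :=
          shrink μ P hμ0 hP0 hP1 L i j h (Nat.lt_succ_iff.mp j.isLt) f hfij
        exact le_trans hle (IH L' hL'lt g (by rw [hgL, hf]))
      · obtain ⟨L', hL'lt, g, hg0, hgL, hle⟩ :=
          shrink μ P hμ0 hP0 hP1 L j i h (Nat.lt_succ_iff.mp i.isLt) f hfij.symm
        exact le_trans hle (IH L' hL'lt g (by rw [hgL, hf]))

lemma pReach_le (hμ0 : ∀ s, 0 ≤ μ s) (hP0 : ∀ s s', 0 ≤ P s s') (hP1 : ∀ s, ∑ s', P s s' = 1)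
    (s : S) (L : ℕ) :
    pReach μ P L s ≤ (Fintype.card S : ℝ) ^ L *
      ∑ h ∈ Finset.range (Fintype.card S), pReach μ P h s := by
  calc pReach μ P L s
      ≤ ∑ _T : Fin L → S, ∑ h ∈ Finset.range (Fintype.card S), pReach μ P h s := by
        apply Finset.sum_le_sum
        intro T _
        exact key μ P hμ0 hP0 hP1 s L
          (fun n => if h : n < L then T ⟨n, h⟩ else s) (by simp)
    _ = (Fintype.card S : ℝ) ^ L * ∑ h ∈ Finset.range (Fintype.card S), pReach μ P h s := by
        rw [Finset.sum_const, Finset.card_univ, Fintype.card_fun, Fintype.card_fin,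
          nsmul_eq_mul]
        push_cast
        ring

end aux

theorem stmt1 {S : Type} [Fintype S]
    (μ : S → ℝ) (P : S → S → ℝ)
    (hμ0 : ∀ s, 0 ≤ μ s) (hμ1 : ∑ s, μ s = 1)
    (hP0 : ∀ s s', 0 ≤ P s s') (hP1 : ∀ s, ∑ s', P s s' = 1)
    (s : S) :
    ∑ h ∈ Finset.range (4 * Fintype.card S), pReach μ P h s ≤
      4 * (Fintype.card S : ℝ) ^ (4 * Fintype.card S) *
        ∑ h ∈ Finset.range (Fintype.card S), pReach μ P h s := by
  have : Nonempty S := ⟨s⟩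
  set n := Fintype.card S with hn
  have hn1 : 1 ≤ n := Fintype.card_pos
  have hn1' : (1 : ℝ) ≤ (n : ℝ) := by exact_mod_cast hn1
  set w := ∑ h ∈ Finset.range n, pReach μ P h s with hw
  have hw0 : 0 ≤ w := Finset.sum_nonneg fun h _ => pReach_nonneg μ P hμ0 hP0 h s
  calc ∑ h ∈ Finset.range (4 * n), pReach μ P h s
      ≤ ∑ _h ∈ Finset.range (4 * n), (n : ℝ) ^ (4 * n - 1) * w := by
        apply Finset.sum_le_sum
        intro L hL
        rw [Finset.mem_range] at hL
        refine le_trans (pReach_le μ P hμ0 hP0 hP1 s L) ?_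
        exact mul_le_mul_of_nonneg_right (pow_le_pow_right₀ hn1' (by omega)) hw0
    _ = 4 * (n : ℝ) ^ (4 * n) * w := by
        rw [Finset.sum_const, Finset.card_range, nsmul_eq_mul]
        have : (n : ℝ) ^ (4 * n) = (n : ℝ) ^ (4 * n - 1) * n := by
          rw [← pow_succ]
          congr 1
          omega
        rw [this]
        push_cast
        ring
end

section
/- Let C = (S, P, μ) be a Markov chain with finite state space S. For any integer α ≥ 0, any integer β ≥ 1, and any state s ∈ S, Σ_{h=0}^{4|S|−1} p_{βh+α}(s, C) ≤ 4 · |S|^{4|S|} · Σ_{h=0}^{|S|−1} p_{βh+α}(s, C). -/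
open Finset

section Aux

variable {S : Type} [Fintype S]

open Classical in
noncomputable def mpow (P : S → S → ℝ) : ℕ → S → S → ℝ
  | 0 => fun t u => if t = u then 1 else 0
  | (m+1) => fun t u => ∑ w, mpow P m t w * P w u

lemma mpow_succ (P : S → S → ℝ) (m : ℕ) (t u : S) :
    mpow P (m+1) t u = ∑ w, mpow P m t w * P w u := rfl

lemma sum_mul_mpow_zero (P : S → S → ℝ) (t : S) (g : S → ℝ) :
    ∑ u, g u * mpow P 0 u t = g t := by
  classical
  simp [mpow, mul_ite]

lemma mpow_nonneg (P : S → S → ℝ) (hP0 : ∀ s s', 0 ≤ P s s') (m : ℕ) (t u : S) :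
    0 ≤ mpow P m t u := by
  induction m generalizing t u with
  | zero => simp only [mpow]; positivity
  | succ m ih =>
      rw [mpow_succ]
      exact Finset.sum_nonneg fun w _ => mul_nonneg (ih t w) (hP0 w u)

lemma mpow_rowsum (P : S → S → ℝ) (hP1 : ∀ s, ∑ s', P s s' = 1) (m : ℕ) (t : S) :
    ∑ u, mpow P m t u = 1 := by
  induction m with
  | zero => classical simp [mpow]
  | succ m ih =>
      simp only [mpow_succ]
      rw [Finset.sum_comm]
      calc ∑ w, ∑ u, mpow P m t w * P w u = ∑ w, mpow P m t w * ∑ u, P w u := by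
            simp [Finset.mul_sum]
        _ = 1 := by simp [hP1]; exact ih

lemma mpow_le_one (P : S → S → ℝ) (hP0 : ∀ s s', 0 ≤ P s s')
    (hP1 : ∀ s, ∑ s', P s s' = 1) (m : ℕ) (t u : S) :
    mpow P m t u ≤ 1 := by
  rw [← mpow_rowsum P hP1 m t]
  exact Finset.single_le_sum (fun w _ => mpow_nonneg P hP0 m t w) (Finset.mem_univ u)

lemma mpow_add (P : S → S → ℝ) (a b : ℕ) (t s : S) :
    mpow P (a + b) t s = ∑ u, mpow P a t u * mpow P b u s := by
  induction b generalizing s with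
  | zero => rw [Nat.add_zero, sum_mul_mpow_zero]
  | succ b ih =>
      rw [← Nat.add_assoc]
      simp only [mpow_succ]
      calc ∑ w, mpow P (a + b) t w * P w s
          = ∑ w, (∑ u, mpow P a t u * mpow P b u w) * P w s := by
            simp only [ih]
        _ = ∑ u, mpow P a t u * ∑ w, mpow P b u w * P w s := by
            simp only [Finset.sum_mul, Finset.mul_sum, mul_assoc]
            rw [Finset.sum_comm]

lemma mpow_mul (P : S → S → ℝ) (b : ℕ) (h : ℕ) (t s : S) :
    mpow (mpow P b) h t s = mpow P (b * h) t s := by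
  induction h generalizing s with
  | zero => rw [Nat.mul_zero]; rfl
  | succ h ih =>
      rw [mpow_succ, Nat.mul_succ, mpow_add]
      simp only [ih]

end Aux
section Reach

variable {S : Type} [Fintype S]

lemma pReach_zero (μ : S → ℝ) (P : S → S → ℝ) (s : S) : pReach μ P 0 s = μ s := by
  simp [pReach]

lemma pReach_succ (μ : S → ℝ) (P : S → S → ℝ) (L : ℕ) (s : S) :
    pReach μ P (L + 1) s = ∑ t, pReach μ P L t * P t s := by
  unfold pReach
  rw [← (Fin.snocEquiv (fun _ : Fin (L + 1) => S)).sum_comp]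
  rw [Fintype.sum_prod_type]
  refine Finset.sum_congr rfl fun t _ => ?_
  rw [Finset.sum_mul]
  refine Finset.sum_congr rfl fun T _ => ?_
  have hco : ⇑(Fin.snocEquiv (fun _ : Fin (L + 1) => S)) (t, T) = Fin.snoc T t := rfl
  simp only [hco]
  have key : ∀ (x : ℕ), x ≤ L →
      (if h : x < L + 1 then (Fin.snoc T t : Fin (L + 1) → S) ⟨x, h⟩ else s)
        = (if h : x < L then T ⟨x, h⟩ else t) := by
    intro x hx
    by_cases hxL : x < L
    · rw [dif_pos (by omega : x < L + 1), dif_pos hxL]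
      have : (⟨x, by omega⟩ : Fin (L + 1)) = Fin.castSucc ⟨x, hxL⟩ := rfl
      rw [this]
      exact Fin.snoc_castSucc ..
    · have hxe : x = L := by omega
      subst hxe
      rw [dif_pos (by omega : x < x + 1), dif_neg (lt_irrefl x)]
      have : (⟨x, by omega⟩ : Fin (x + 1)) = Fin.last x := rfl
      rw [this]
      exact Fin.snoc_last ..
  have hL : (if h : L < L + 1 then (Fin.snoc T t : Fin (L + 1) → S) ⟨L, h⟩ else s) = t :=
    (key L le_rfl).trans (dif_neg (lt_irrefl L))
  have hL1 : (if h : L + 1 < L + 1 then (Fin.snoc T t : Fin (L + 1) → S) ⟨L + 1, h⟩ else s)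
      = s := dif_neg (by omega)
  rw [Finset.prod_range_succ, key 0 (by omega), hL, hL1]
  rw [Finset.prod_congr rfl fun x hx => ?_]
  · ring
  · have hx' : x < L := Finset.mem_range.mp hx
    rw [key x (by omega), key (x + 1) (by omega)]

lemma pReach_eq (μ : S → ℝ) (P : S → S → ℝ) (L : ℕ) (s : S) :
    pReach μ P L s = ∑ t, μ t * mpow P L t s := by
  induction L generalizing s with
  | zero => rw [pReach_zero, sum_mul_mpow_zero]
  | succ L ih =>
      rw [pReach_succ]
      simp only [ih, mpow_succ, Finset.mul_sum]
      rw [Finset.sum_comm]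
      simp only [Finset.sum_mul, mul_assoc]

end Reach
section Walk

variable {S : Type} [Fintype S]

lemma walk_le_mpow (P : S → S → ℝ) (hP0 : ∀ s s', 0 ≤ P s s') (f : ℕ → S) :
    ∀ m, ∏ x ∈ Finset.range m, P (f x) (f (x + 1)) ≤ mpow P m (f 0) (f m) := by
  intro m
  induction m with
  | zero => simp [mpow]
  | succ m ih =>
      rw [Finset.prod_range_succ, mpow_succ]
      calc (∏ x ∈ Finset.range m, P (f x) (f (x + 1))) * P (f m) (f (m + 1))
          ≤ mpow P m (f 0) (f m) * P (f m) (f (m + 1)) :=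
            mul_le_mul_of_nonneg_right ih (hP0 _ _)
        _ ≤ ∑ w, mpow P m (f 0) w * P w (f (m + 1)) :=
            Finset.single_le_sum
              (fun w _ => mul_nonneg (mpow_nonneg P hP0 m _ w) (hP0 w _))
              (Finset.mem_univ (f m))

lemma walk_cut (P : S → S → ℝ) (hP0 : ∀ s s', 0 ≤ P s s')
    (hP1 : ∀ s s', P s s' ≤ 1) :
    ∀ m (f : ℕ → S), ∃ k < Fintype.card S,
      ∏ x ∈ Finset.range m, P (f x) (f (x + 1)) ≤ mpow P k (f 0) (f m) := by
  intro m
  induction m using Nat.strong_induction_on with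
  | _ m IH =>
    intro f
    set n := Fintype.card S with hn
    by_cases hm : m < n
    · exact ⟨m, hm, walk_le_mpow P hP0 f m⟩
    · push_neg at hm
      -- pigeonhole on f 0, ..., f n
      have hcard : Fintype.card S < Fintype.card (Fin (n + 1)) := by simp [hn]
      obtain ⟨a, b, hab, heq⟩ :=
        Fintype.exists_ne_map_eq_of_card_lt (fun i : Fin (n + 1) => f i) hcard
      -- wlog a < b
      obtain ⟨i, j, hij, hfij, hjn⟩ :
          ∃ i j : ℕ, i < j ∧ f i = f j ∧ j ≤ n := by
        rcases lt_or_gt_of_ne (fun h => hab (Fin.ext h) : (a : ℕ) ≠ (b : ℕ)) with h | h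
        · exact ⟨a, b, h, heq, by omega⟩
        · exact ⟨b, a, h, heq.symm, by omega⟩
      set d := j - i with hd
      have hd1 : 1 ≤ d := by omega
      have hdm : d ≤ m := by omega
      set f' : ℕ → S := fun x => if x ≤ i then f x else f (x + d) with hf'
      set m' := m - d with hm'
      have hm'm : m' < m := by omega
      have hfi' : ∀ x, i ≤ x → f' x = f (x + d) := by
        intro x hx
        by_cases h : x ≤ i
        · have : x = i := le_antisymm h hx
          subst this
          simp only [hf', if_pos le_rfl]
          have : x + d = j := by omega
          rw [this, hfij]
        · simp only [hf', if_neg h]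
      have h0 : f' 0 = f 0 := by simp [hf']
      have hend : f' m' = f m := by
        rw [hfi' m' (by omega)]
        congr 1
        omega
      have hle : ∏ x ∈ Finset.range m, P (f x) (f (x + 1))
          ≤ ∏ x ∈ Finset.range m', P (f' x) (f' (x + 1)) := by
        have hsplit : Finset.range m = Finset.range i ∪ Finset.Ico i j ∪ Finset.Ico j m := by
          rw [Finset.range_eq_Ico, Finset.range_eq_Ico]
          rw [Finset.Ico_union_Ico_eq_Ico (by omega) (by omega),
              Finset.Ico_union_Ico_eq_Ico (by omega) (by omega)]
        have hsplit' : Finset.range m' = Finset.range i ∪ Finset.Ico i m' := by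
          rw [Finset.range_eq_Ico, Finset.range_eq_Ico, Finset.Ico_union_Ico_eq_Ico (by omega) (by omega)]
        have hdj1 : Disjoint (Finset.range i ∪ Finset.Ico i j) (Finset.Ico j m) := by
          refine Finset.disjoint_left.mpr fun x hx hx' => ?_
          simp only [Finset.mem_union, Finset.mem_range, Finset.mem_Ico] at hx hx'
          omega
        have hdj2 : Disjoint (Finset.range i) (Finset.Ico i j) := by
          refine Finset.disjoint_left.mpr fun x hx hx' => ?_
          simp only [Finset.mem_range, Finset.mem_Ico] at hx hx'
          omega
        have hdj3 : Disjoint (Finset.range i) (Finset.Ico i m') := by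
          refine Finset.disjoint_left.mpr fun x hx hx' => ?_
          simp only [Finset.mem_range, Finset.mem_Ico] at hx hx'
          omega
        rw [hsplit, Finset.prod_union hdj1, Finset.prod_union hdj2, hsplit',
            Finset.prod_union hdj3]
        have hA : ∀ x ∈ Finset.range i, P (f' x) (f' (x + 1)) = P (f x) (f (x + 1)) := by
          intro x hx
          have hx' : x < i := Finset.mem_range.mp hx
          simp only [hf', if_pos (by omega : x ≤ i), if_pos (by omega : x + 1 ≤ i)]
        have hC : ∏ x ∈ Finset.Ico i m', P (f' x) (f' (x + 1))
            = ∏ x ∈ Finset.Ico j m, P (f x) (f (x + 1)) := by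
          rw [Finset.prod_Ico_eq_prod_range, Finset.prod_Ico_eq_prod_range]
          have : m' - i = m - j := by omega
          rw [this]
          refine Finset.prod_congr rfl fun x _ => ?_
          rw [hfi' (i + x) (by omega), hfi' (i + x + 1) (by omega)]
          congr 2 <;> omega
        rw [Finset.prod_congr rfl hA, hC]
        have hnonneg : ∀ (T : Finset ℕ), 0 ≤ ∏ x ∈ T, P (f x) (f (x + 1)) :=
          fun T => Finset.prod_nonneg fun x _ => hP0 _ _
        have hB1 : ∏ x ∈ Finset.Ico i j, P (f x) (f (x + 1)) ≤ 1 :=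
          Finset.prod_le_one (fun x _ => hP0 _ _) (fun x _ => hP1 _ _)
        calc (∏ x ∈ Finset.range i, P (f x) (f (x + 1))) *
                (∏ x ∈ Finset.Ico i j, P (f x) (f (x + 1))) *
                (∏ x ∈ Finset.Ico j m, P (f x) (f (x + 1)))
            ≤ (∏ x ∈ Finset.range i, P (f x) (f (x + 1))) * 1 *
                (∏ x ∈ Finset.Ico j m, P (f x) (f (x + 1))) := by
              apply mul_le_mul_of_nonneg_right _ (hnonneg _)
              exact mul_le_mul_of_nonneg_left hB1 (hnonneg (Finset.range i))
          _ = (∏ x ∈ Finset.range i, P (f x) (f (x + 1))) *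
                (∏ x ∈ Finset.Ico j m, P (f x) (f (x + 1))) := by ring
      obtain ⟨k, hk, hk2⟩ := IH m' hm'm f'
      refine ⟨k, hk, hle.trans ?_⟩
      rw [h0, hend] at hk2
      exact hk2

end Walk
section Count

variable {S : Type} [Fintype S]

lemma mpow_le_sum (P : S → S → ℝ) (hP0 : ∀ s s', 0 ≤ P s s')
    (hP1 : ∀ s, ∑ s', P s s' = 1) (m : ℕ) (t s : S) :
    mpow P m t s ≤ (Fintype.card S : ℝ) ^ m *
      ∑ k ∈ Finset.range (Fintype.card S), mpow P k t s := by
  classical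
  set n := Fintype.card S with hn
  set F := ∑ k ∈ Finset.range n, mpow P k t s with hFdef
  have hF0 : 0 ≤ F :=
    Finset.sum_nonneg fun k _ => mpow_nonneg P hP0 k t s
  have hP1e : ∀ a b, P a b ≤ 1 := fun a b => by
    rw [← hP1 a]
    exact Finset.single_le_sum (fun w _ => hP0 a w) (Finset.mem_univ b)
  have hrep : mpow P m t s = pReach (fun u => if u = t then 1 else 0) P m s := by
    rw [pReach_eq]
    simp [ite_mul]
  rw [hrep]
  unfold pReach
  have hbound : ∀ T : Fin m → S,
      (fun f : ℕ → S =>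
          (if f 0 = t then (1 : ℝ) else 0) * ∏ h ∈ Finset.range m, P (f h) (f (h + 1)))
        (fun x => if h : x < m then T ⟨x, h⟩ else s) ≤ F := by
    intro T
    set fT : ℕ → S := fun x => if h : x < m then T ⟨x, h⟩ else s with hfT
    have hfm : fT m = s := dif_neg (lt_irrefl m)
    by_cases h0 : fT 0 = t
    · obtain ⟨k, hk, hkle⟩ := walk_cut P hP0 hP1e m fT
      rw [h0, hfm] at hkle
      simp only [h0, if_pos]
      rw [one_mul]
      refine hkle.trans ?_
      exact Finset.single_le_sum (fun k _ => mpow_nonneg P hP0 k t s)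
        (Finset.mem_range.mpr hk)
    · simp only [h0, if_neg, not_false_iff, zero_mul]
      exact hF0
  calc (∑ T : Fin m → S,
        (fun f : ℕ → S =>
            (if f 0 = t then (1 : ℝ) else 0) * ∏ h ∈ Finset.range m, P (f h) (f (h + 1)))
          (fun x => if h : x < m then T ⟨x, h⟩ else s))
      ≤ ∑ _T : Fin m → S, F := Finset.sum_le_sum fun T _ => hbound T
    _ = (Fintype.card (Fin m → S) : ℝ) * F := by
        rw [Finset.sum_const, Finset.card_univ, nsmul_eq_mul]
    _ = (n : ℝ) ^ m * F := by
        congr 1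
        rw [Fintype.card_fun]
        push_cast
        simp [hn]

end Count

theorem stmt2 {S : Type} [Fintype S]
    (μ : S → ℝ) (P : S → S → ℝ)
    (hμ0 : ∀ s, 0 ≤ μ s) (hμ1 : ∑ s, μ s = 1)
    (hP0 : ∀ s s', 0 ≤ P s s') (hP1 : ∀ s, ∑ s', P s s' = 1)
    (α β : ℕ) (hβ : 1 ≤ β) (s : S) :
    ∑ h ∈ Finset.range (4 * Fintype.card S), pReach μ P (β * h + α) s ≤
      4 * (Fintype.card S : ℝ) ^ (4 * Fintype.card S) *
        ∑ h ∈ Finset.range (Fintype.card S), pReach μ P (β * h + α) s := by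
  classical
  set n := Fintype.card S with hn
  have hn1 : 1 ≤ n := Fintype.card_pos_iff.mpr ⟨s⟩
  set Q : S → S → ℝ := mpow P β with hQ
  have hQ0 : ∀ a b, 0 ≤ Q a b := fun a b => mpow_nonneg P hP0 β a b
  have hQ1 : ∀ a, ∑ b, Q a b = 1 := fun a => mpow_rowsum P hP1 β a
  have hrw : ∀ h : ℕ, pReach μ P (β * h + α) s
      = ∑ t, pReach μ P α t * mpow Q h t s := by
    intro h
    rw [pReach_eq]
    have hm : ∀ u, mpow P (β * h + α) u s = ∑ t, mpow P α u t * mpow Q h t s := by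
      intro u
      have h1 : β * h + α = α + β * h := by omega
      rw [h1, mpow_add]
      refine Finset.sum_congr rfl fun t _ => ?_
      rw [hQ, mpow_mul]
    calc ∑ u, μ u * mpow P (β * h + α) u s
        = ∑ u, ∑ t, μ u * (mpow P α u t * mpow Q h t s) := by
          simp only [hm, Finset.mul_sum]
      _ = ∑ t, (∑ u, μ u * mpow P α u t) * mpow Q h t s := by
          rw [Finset.sum_comm]
          simp only [Finset.sum_mul, mul_assoc]
      _ = ∑ t, pReach μ P α t * mpow Q h t s := by
          simp only [← pReach_eq]
  have hv0 : ∀ t, 0 ≤ pReach μ P α t := fun t => by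
    rw [pReach_eq]
    exact Finset.sum_nonneg fun u _ => mul_nonneg (hμ0 u) (mpow_nonneg P hP0 α u t)
  set F := ∑ k ∈ Finset.range n, pReach μ P (β * k + α) s with hFdef
  have hF0 : 0 ≤ F := by
    rw [hFdef]
    refine Finset.sum_nonneg fun k _ => ?_
    rw [hrw k]
    exact Finset.sum_nonneg fun t _ =>
      mul_nonneg (hv0 t) (mpow_nonneg Q hQ0 k t s)
  have hterm : ∀ h : ℕ, pReach μ P (β * h + α) s ≤ (n : ℝ) ^ h * F := by
    intro h
    rw [hrw h]
    calc ∑ t, pReach μ P α t * mpow Q h t s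
        ≤ ∑ t, pReach μ P α t *
            ((n : ℝ) ^ h * ∑ k ∈ Finset.range n, mpow Q k t s) :=
          Finset.sum_le_sum fun t _ =>
            mul_le_mul_of_nonneg_left (mpow_le_sum Q hQ0 hQ1 h t s) (hv0 t)
      _ = (n : ℝ) ^ h * ∑ k ∈ Finset.range n, ∑ t, pReach μ P α t * mpow Q k t s := by
          simp only [Finset.mul_sum]
          rw [Finset.sum_comm]
          refine Finset.sum_congr rfl fun k _ => Finset.sum_congr rfl fun t _ => by ring
      _ = (n : ℝ) ^ h * F := by
          rw [hFdef]
          congr 1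
          exact Finset.sum_congr rfl fun k _ => (hrw k).symm
  calc ∑ h ∈ Finset.range (4 * n), pReach μ P (β * h + α) s
      ≤ ∑ _h ∈ Finset.range (4 * n), (n : ℝ) ^ (4 * n - 1) * F := by
        refine Finset.sum_le_sum fun h hh => (hterm h).trans ?_
        refine mul_le_mul_of_nonneg_right ?_ hF0
        refine pow_le_pow_right₀ (by exact_mod_cast hn1) ?_
        have := Finset.mem_range.mp hh
        omega
    _ = (4 * n : ℝ) * ((n : ℝ) ^ (4 * n - 1) * F) := by
        rw [Finset.sum_const, Finset.card_range, nsmul_eq_mul]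
        push_cast
        ring
    _ = 4 * (n : ℝ) ^ (4 * n) * F := by
        have hp : (n : ℝ) ^ (4 * n) = (n : ℝ) ^ (4 * n - 1) * (n : ℝ) := by
          rw [← pow_succ]
          congr 1
          omega
        rw [hp]
        ring
end

section
/- Let M = (S, A, P, R, H, μ) be a finite MDP and π : S → A a stationary policy. If H ≥ 2|S|, then V^π_{M,⌊H/2⌋} ≥ (1/(4 · |S|^{4|S|})) · V^π_{M,H}. -/
open Finset

/-- Finite-horizon value of a stationary policy, written via the induced Markov chain `Pc` and
mean reward function `rc`: `V = Σ_s Σ_{h<L} p_h(s) · E[R(s, π(s))]`. -/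
noncomputable def Vfin {S : Type} [Fintype S] (μ : S → ℝ) (Pc : S → S → ℝ) (rc : S → ℝ)
    (L : ℕ) : ℝ :=
  ∑ s : S, (∑ h ∈ Finset.range L, pReach μ Pc h s) * rc s

set_option linter.unusedSectionVars false
set_option linter.unusedVariables false
set_option linter.unreachableTactic false
set_option linter.unusedTactic false

namespace Stmt5Aux
variable {S : Type} [Fintype S] [DecidableEq S]

noncomputable def wprod (R : Matrix S S ℝ) (k : ℕ) (x : Fin (k+1) → S) : ℝ :=
  ∏ i : Fin k, R (x i.castSucc) (x i.succ)

lemma sum_snoc (k : ℕ) (F : (Fin (k+1) → S) → ℝ) :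
    ∑ x : Fin (k+1) → S, F x = ∑ x' : Fin k → S, ∑ y : S, F (Fin.snoc x' y) := by
  classical
  let e : ((Fin k → S) × S) ≃ (Fin (k+1) → S) :=
    { toFun := fun p => Fin.snoc p.1 p.2
      invFun := fun x => (Fin.init x, x (Fin.last k))
      left_inv := by
        rintro ⟨x', y⟩
        simp [Fin.init_snoc, Fin.snoc_last]
      right_inv := by
        intro x
        simp [Fin.snoc_init_self] }
  rw [← Equiv.sum_comp e F, Fintype.sum_prod_type]
  simp only [e, Equiv.coe_fn_mk]

lemma wprod_snoc (R : Matrix S S ℝ) (k : ℕ) (x' : Fin (k+1) → S) (y : S) :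
    wprod R (k+1) (Fin.snoc x' y) = wprod R k x' * R (x' (Fin.last k)) y := by
  unfold wprod
  rw [Fin.prod_univ_castSucc]
  congr 1
  · apply Finset.prod_congr rfl
    intro i _
    rw [Fin.succ_castSucc, Fin.snoc_castSucc, Fin.snoc_castSucc]
  · rw [Fin.snoc_castSucc, Fin.succ_last, Fin.snoc_last]

lemma pow_nonneg_entry (R : Matrix S S ℝ) (hR : ∀ y z, 0 ≤ R y z) (k : ℕ) :
    ∀ y z, 0 ≤ (R ^ k) y z := by
  induction k with
  | zero =>
    intro y z
    classical
    rw [pow_zero, Matrix.one_apply]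
    split <;> norm_num
  | succ k ih =>
    intro y z
    rw [pow_succ, Matrix.mul_apply]
    exact Finset.sum_nonneg fun w _ => mul_nonneg (ih y w) (hR w z)

lemma pow_row_sum (R : Matrix S S ℝ) (hR1 : ∀ y, ∑ z, R y z = 1) (k : ℕ) :
    ∀ y, ∑ z, (R ^ k) y z = 1 := by
  induction k with
  | zero =>
    intro y
    classical
    simp [pow_zero, Matrix.one_apply]
  | succ k ih =>
    intro y
    rw [pow_succ]
    simp only [Matrix.mul_apply]
    rw [Finset.sum_comm]
    calc ∑ w : S, ∑ z : S, (R ^ k) y w * R w z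
        = ∑ w : S, (R ^ k) y w * ∑ z : S, R w z := by
          apply Finset.sum_congr rfl; intro w _; rw [Finset.mul_sum]
      _ = 1 := by
          simp only [hR1, mul_one]; exact ih y

lemma pow_entry_le_one (R : Matrix S S ℝ) (hR : ∀ y z, 0 ≤ R y z)
    (hR1 : ∀ y, ∑ z, R y z = 1) (k : ℕ) (y z : S) : (R ^ k) y z ≤ 1 := by
  have h := pow_row_sum R hR1 k y
  have : (R ^ k) y z ≤ ∑ z', (R ^ k) y z' :=
    Finset.single_le_sum (fun w _ => pow_nonneg_entry R hR k y w) (Finset.mem_univ z)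
  linarith

lemma wprod_nonneg (R : Matrix S S ℝ) (hR : ∀ y z, 0 ≤ R y z) (k : ℕ) (x : Fin (k+1) → S) :
    0 ≤ wprod R k x :=
  Finset.prod_nonneg fun i _ => hR _ _

lemma L1g (R : Matrix S S ℝ) (μ : S → ℝ) (k : ℕ) :
    ∀ g : S → ℝ,
      ∑ x : Fin (k+1) → S, μ (x 0) * wprod R k x * g (x (Fin.last k)) =
        ∑ y, ∑ z, μ y * (R ^ k) y z * g z := by
  classical
  induction k with
  | zero =>
    intro g
    rw [← Equiv.sum_comp (Equiv.funUnique (Fin 1) S).symm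
      (fun x : Fin 1 → S => μ (x 0) * wprod R 0 x * g (x (Fin.last 0)))]
    simp [wprod, Matrix.one_apply, Finset.sum_ite_eq, Equiv.funUnique]
  | succ k ih =>
    intro g
    rw [sum_snoc]
    have : ∀ x' : Fin (k+1) → S, ∀ y : S,
        μ ((Fin.snoc x' y : Fin (k+2) → S) 0) * wprod R (k+1) (Fin.snoc x' y) *
          g ((Fin.snoc x' y : Fin (k+2) → S) (Fin.last (k+1)))
        = μ (x' 0) * wprod R k x' * (R (x' (Fin.last k)) y * g y) := by
      intro x' y
      have h0 : (Fin.snoc x' y : Fin (k+2) → S) 0 = x' 0 := by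
        have : (0 : Fin (k+2)) = Fin.castSucc 0 := rfl
        rw [this, Fin.snoc_castSucc]
      rw [h0, wprod_snoc, Fin.snoc_last]
      ring
    simp only [this]
    have swap : ∀ x' : Fin (k+1) → S,
        ∑ y : S, μ (x' 0) * wprod R k x' * (R (x' (Fin.last k)) y * g y)
        = μ (x' 0) * wprod R k x' * (∑ y : S, R (x' (Fin.last k)) y * g y) := by
      intro x'; rw [Finset.mul_sum]
    simp only [swap]
    rw [ih (fun a => ∑ y : S, R a y * g y)]
    apply Finset.sum_congr rfl; intro y _
    calc ∑ z : S, μ y * (R ^ k) y z * ∑ b : S, R z b * g b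
        = ∑ z : S, ∑ b : S, μ y * (R ^ k) y z * (R z b * g b) := by
          apply Finset.sum_congr rfl; intro z _
          rw [Finset.mul_sum]
      _ = ∑ b : S, ∑ z : S, μ y * (R ^ k) y z * (R z b * g b) := Finset.sum_comm
      _ = ∑ b : S, μ y * (R ^ (k+1)) y b * g b := by
          apply Finset.sum_congr rfl; intro b _
          rw [pow_succ, Matrix.mul_apply, Finset.mul_sum, Finset.sum_mul]
          apply Finset.sum_congr rfl; intro z _; ring

lemma L2' (R : Matrix S S ℝ) (μ : S → ℝ) (k : ℕ) :
    ∀ (a : Fin (k+1)) (Ψ : S → S → ℝ),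
      ∑ x : Fin (k+1) → S, μ (x 0) * wprod R k x * Ψ (x a) (x (Fin.last k)) =
        ∑ y, ∑ z, ∑ c, μ y * (R ^ (a : ℕ)) y z * ((R ^ (k - (a : ℕ))) z c * Ψ z c) := by
  induction k with
  | zero =>
    intro a Ψ
    have ha : a = 0 := Fin.fin_one_eq_zero a
    subst ha
    rw [← Equiv.sum_comp (Equiv.funUnique (Fin 1) S).symm
      (fun x : Fin 1 → S => μ (x 0) * wprod R 0 x * Ψ (x 0) (x (Fin.last 0)))]
    simp [wprod, Matrix.one_apply, Finset.sum_ite_eq, Equiv.funUnique]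
  | succ k ih =>
    intro a Ψ
    by_cases ha : a = Fin.last (k+1)
    · subst ha
      have := L1g R μ (k+1) (fun c => Ψ c c)
      rw [this]
      apply Finset.sum_congr rfl; intro y _
      apply Finset.sum_congr rfl; intro z _
      simp [Fin.val_last, Matrix.one_apply, mul_ite, ite_mul, Finset.sum_ite_eq]
    · obtain ⟨a', ha'⟩ := Fin.exists_castSucc_eq.mpr ha
      subst ha'
      rw [sum_snoc]
      have key : ∀ x' : Fin (k+1) → S, ∀ y : S,
          μ ((Fin.snoc x' y : Fin (k+2) → S) 0) * wprod R (k+1) (Fin.snoc x' y) *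
            Ψ ((Fin.snoc x' y : Fin (k+2) → S) a'.castSucc)
              ((Fin.snoc x' y : Fin (k+2) → S) (Fin.last (k+1)))
          = μ (x' 0) * wprod R k x' * (R (x' (Fin.last k)) y * Ψ (x' a') y) := by
        intro x' y
        have h0 : (Fin.snoc x' y : Fin (k+2) → S) 0 = x' 0 := by
          have : (0 : Fin (k+2)) = Fin.castSucc 0 := rfl
          rw [this, Fin.snoc_castSucc]
        rw [h0, wprod_snoc, Fin.snoc_last, Fin.snoc_castSucc]
        ring
      simp only [key]
      have swap : ∀ x' : Fin (k+1) → S,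
          ∑ y : S, μ (x' 0) * wprod R k x' * (R (x' (Fin.last k)) y * Ψ (x' a') y)
          = μ (x' 0) * wprod R k x' * (∑ y : S, R (x' (Fin.last k)) y * Ψ (x' a') y) := by
        intro x'; rw [Finset.mul_sum]
      simp only [swap]
      rw [ih a' (fun z c => ∑ y : S, R c y * Ψ z y)]
      apply Finset.sum_congr rfl; intro y _
      apply Finset.sum_congr rfl; intro z _
      have hcoe : ((a'.castSucc : Fin (k+2)) : ℕ) = (a' : ℕ) := Fin.coe_castSucc a'
      rw [hcoe]
      calc ∑ c : S, μ y * (R ^ (a' : ℕ)) y z * ((R ^ (k - (a' : ℕ))) z c * ∑ b : S, R c b * Ψ z b)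
          = ∑ c : S, ∑ b : S, μ y * (R ^ (a' : ℕ)) y z *
              ((R ^ (k - (a' : ℕ))) z c * (R c b * Ψ z b)) := by
            apply Finset.sum_congr rfl; intro c _
            rw [Finset.mul_sum, Finset.mul_sum]
        _ = ∑ b : S, ∑ c : S, μ y * (R ^ (a' : ℕ)) y z *
              ((R ^ (k - (a' : ℕ))) z c * (R c b * Ψ z b)) := Finset.sum_comm
        _ = ∑ c : S, μ y * (R ^ (a' : ℕ)) y z * ((R ^ (k + 1 - (a' : ℕ))) z c * Ψ z c) := by
            apply Finset.sum_congr rfl; intro b _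
            have hk : k + 1 - (a' : ℕ) = (k - (a' : ℕ)) + 1 := by
              have := a'.isLt; omega
            rw [hk, pow_succ, Matrix.mul_apply, Finset.sum_mul, Finset.mul_sum]
            apply Finset.sum_congr rfl; intro c _; ring

lemma L3' (R : Matrix S S ℝ) (μ : S → ℝ) (k : ℕ) :
    ∀ (a b : Fin (k+1)), a ≤ b → ∀ (Θ : S → S → ℝ) (g : S → ℝ),
      ∑ x : Fin (k+1) → S, μ (x 0) * wprod R k x * (Θ (x a) (x b) * g (x (Fin.last k))) =
        ∑ y, ∑ z, ∑ c, ∑ e, μ y * (R ^ (a : ℕ)) y z *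
          ((R ^ ((b : ℕ) - (a : ℕ))) z c * (Θ z c * ((R ^ (k - (b : ℕ))) c e * g e))) := by
  induction k with
  | zero =>
    intro a b hab Θ g
    have ha : a = 0 := Fin.fin_one_eq_zero a
    have hb : b = 0 := Fin.fin_one_eq_zero b
    subst ha; subst hb
    rw [← Equiv.sum_comp (Equiv.funUnique (Fin 1) S).symm
      (fun x : Fin 1 → S => μ (x 0) * wprod R 0 x * (Θ (x 0) (x 0) * g (x (Fin.last 0))))]
    simp [wprod, Matrix.one_apply, mul_ite, ite_mul, Finset.sum_ite_eq, Equiv.funUnique]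
  | succ k ih =>
    intro a b hab Θ g
    by_cases hb : b = Fin.last (k+1)
    · subst hb
      have := L2' R μ (k+1) a (fun z c => Θ z c * g c)
      calc ∑ x : Fin (k+2) → S, μ (x 0) * wprod R (k+1) x *
              (Θ (x a) (x (Fin.last (k+1))) * g (x (Fin.last (k+1))))
          = ∑ y, ∑ z, ∑ c, μ y * (R ^ (a : ℕ)) y z *
              ((R ^ (k + 1 - (a : ℕ))) z c * (Θ z c * g c)) := this
        _ = _ := by
            apply Finset.sum_congr rfl; intro y _
            apply Finset.sum_congr rfl; intro z _
            apply Finset.sum_congr rfl; intro c _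
            simp [Fin.val_last, Matrix.one_apply, mul_ite, ite_mul, Finset.sum_ite_eq]
    · obtain ⟨b', hb'⟩ := Fin.exists_castSucc_eq.mpr hb
      subst hb'
      have haa : a ≠ Fin.last (k+1) := by
        intro h
        subst h
        have h1 : (Fin.last (k+1) : Fin (k+2)) ≤ b'.castSucc := hab
        have h2 := b'.isLt
        have := Fin.le_def.mp h1
        simp [Fin.val_last] at this
        omega
      obtain ⟨a', ha'⟩ := Fin.exists_castSucc_eq.mpr haa
      subst ha'
      have hab' : a' ≤ b' := by
        have := Fin.le_def.mp hab
        simp only [Fin.coe_castSucc] at this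
        exact Fin.le_def.mpr this
      rw [sum_snoc]
      have key : ∀ x' : Fin (k+1) → S, ∀ y : S,
          μ ((Fin.snoc x' y : Fin (k+2) → S) 0) * wprod R (k+1) (Fin.snoc x' y) *
            (Θ ((Fin.snoc x' y : Fin (k+2) → S) a'.castSucc)
                ((Fin.snoc x' y : Fin (k+2) → S) b'.castSucc) *
              g ((Fin.snoc x' y : Fin (k+2) → S) (Fin.last (k+1))))
          = μ (x' 0) * wprod R k x' *
              (R (x' (Fin.last k)) y * (Θ (x' a') (x' b') * g y)) := by
        intro x' y
        have h0 : (Fin.snoc x' y : Fin (k+2) → S) 0 = x' 0 := by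
          have : (0 : Fin (k+2)) = Fin.castSucc 0 := rfl
          rw [this, Fin.snoc_castSucc]
        rw [h0, wprod_snoc, Fin.snoc_last, Fin.snoc_castSucc, Fin.snoc_castSucc]
        ring
      simp only [key]
      have swap : ∀ x' : Fin (k+1) → S,
          ∑ y : S, μ (x' 0) * wprod R k x' * (R (x' (Fin.last k)) y * (Θ (x' a') (x' b') * g y))
          = μ (x' 0) * wprod R k x' *
              (Θ (x' a') (x' b') * ∑ y : S, R (x' (Fin.last k)) y * g y) := by
        intro x'; rw [Finset.mul_sum]; rw [Finset.mul_sum]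
        apply Finset.sum_congr rfl; intro y _; ring
      simp only [swap]
      rw [ih a' b' hab' Θ (fun c => ∑ y : S, R c y * g y)]
      apply Finset.sum_congr rfl; intro y _
      apply Finset.sum_congr rfl; intro z _
      apply Finset.sum_congr rfl; intro c _
      simp only [Fin.coe_castSucc]
      calc ∑ e : S, μ y * (R ^ (a' : ℕ)) y z * ((R ^ ((b' : ℕ) - (a' : ℕ))) z c *
              (Θ z c * ((R ^ (k - (b' : ℕ))) c e * ∑ w : S, R e w * g w)))
          = ∑ e : S, ∑ w : S, μ y * (R ^ (a' : ℕ)) y z * ((R ^ ((b' : ℕ) - (a' : ℕ))) z c *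
              (Θ z c * ((R ^ (k - (b' : ℕ))) c e * (R e w * g w)))) := by
            apply Finset.sum_congr rfl; intro e _
            rw [Finset.mul_sum, Finset.mul_sum, Finset.mul_sum, Finset.mul_sum]
        _ = ∑ w : S, ∑ e : S, μ y * (R ^ (a' : ℕ)) y z * ((R ^ ((b' : ℕ) - (a' : ℕ))) z c *
              (Θ z c * ((R ^ (k - (b' : ℕ))) c e * (R e w * g w)))) := Finset.sum_comm
        _ = ∑ e : S, μ y * (R ^ (a' : ℕ)) y z * ((R ^ ((b' : ℕ) - (a' : ℕ))) z c *
              (Θ z c * ((R ^ (k + 1 - (b' : ℕ))) c e * g e))) := by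
            apply Finset.sum_congr rfl; intro w _
            have hk : k + 1 - (b' : ℕ) = (k - (b' : ℕ)) + 1 := by
              have := b'.isLt; omega
            rw [hk, pow_succ, Matrix.mul_apply, Finset.sum_mul, Finset.mul_sum,
              Finset.mul_sum, Finset.mul_sum]
            apply Finset.sum_congr rfl; intro e _; ring

noncomputable def qf (Q : Matrix S S ℝ) (μ : S → ℝ) (s : S) (h : ℕ) : ℝ :=
  ∑ y, μ y * (Q ^ h) y s

lemma qf_nonneg (Q : Matrix S S ℝ) (hQ0 : ∀ y z, 0 ≤ Q y z) (μ : S → ℝ)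
    (hμ : ∀ y, 0 ≤ μ y) (s : S) (h : ℕ) : 0 ≤ qf Q μ s h :=
  Finset.sum_nonneg fun y _ => mul_nonneg (hμ y) (pow_nonneg_entry Q hQ0 h y s)

lemma star (Q : Matrix S S ℝ) (hQ0 : ∀ y z, 0 ≤ Q y z) (hQ1 : ∀ y, ∑ z, Q y z = 1)
    (μ : S → ℝ) (hμ : ∀ y, 0 ≤ μ y) (s : S) (n d : ℕ)
    (hcard : Fintype.card S = n) (hn : 1 ≤ n) (hd : 1 ≤ d)
    (h : ℕ) (hh : n * d ≤ h) :
    qf Q μ s h ≤ (n : ℝ) * ∑ m ∈ Finset.Icc 1 n, qf Q μ s (h - m * d) := by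
  classical
  set R : Matrix S S ℝ := Q ^ d with hR
  have hR0 : ∀ y z, 0 ≤ R y z := pow_nonneg_entry Q hQ0 d
  have hR1 : ∀ y, ∑ z, R y z = 1 := pow_row_sum Q hQ1 d
  have hRpow : ∀ t : ℕ, R ^ t = Q ^ (t * d) := by
    intro t; rw [hR, ← pow_mul, Nat.mul_comm]
  set g : S → ℝ := fun e => (Q ^ (h - n * d)) e s with hg
  have hg0 : ∀ e, 0 ≤ g e := fun e => pow_nonneg_entry Q hQ0 _ e s
  -- Step A : expansion
  have expA : qf Q μ s h = ∑ x : Fin (n+1) → S, μ (x 0) * wprod R n x * g (x (Fin.last n)) := by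
    rw [L1g]
    unfold qf
    apply Finset.sum_congr rfl; intro y _
    calc μ y * (Q ^ h) y s
        = μ y * ((Q ^ (n * d) * Q ^ (h - n * d)) y s) := by
          rw [← pow_add, Nat.add_sub_cancel' hh]
      _ = ∑ z : S, μ y * (R ^ n) y z * g z := by
          rw [Matrix.mul_apply, Finset.mul_sum, hRpow n]
          apply Finset.sum_congr rfl; intro z _
          rw [hg]; ring
  -- base function and indicator
  set base : (Fin (n+1) → S) → ℝ := fun x => μ (x 0) * wprod R n x * g (x (Fin.last n))
    with hbase
  have hbase0 : ∀ x, 0 ≤ base x := fun x =>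
    mul_nonneg (mul_nonneg (hμ _) (wprod_nonneg R hR0 n x)) (hg0 _)
  set ind : (Fin (n+1) × Fin (n+1)) → (Fin (n+1) → S) → ℝ :=
    fun p x => if p.1 < p.2 ∧ x p.1 = x p.2 then 1 else 0 with hind
  have hind0 : ∀ p x, 0 ≤ ind p x := by
    intro p x; rw [hind]; dsimp only; split <;> norm_num
  have pigeon : ∀ x : Fin (n+1) → S, (1 : ℝ) ≤ ∑ p : Fin (n+1) × Fin (n+1), ind p x := by
    intro x
    obtain ⟨i, j, hne, heq⟩ := Fintype.exists_ne_map_eq_of_card_lt x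
      (by rw [hcard, Fintype.card_fin]; omega)
    rcases lt_or_gt_of_ne hne with hij | hij
    · have : ind (i, j) x = 1 := by rw [hind]; simp [hij, heq]
      calc (1 : ℝ) = ind (i, j) x := this.symm
        _ ≤ ∑ p : Fin (n+1) × Fin (n+1), ind p x :=
            Finset.single_le_sum (fun p _ => hind0 p x) (Finset.mem_univ _)
    · have : ind (j, i) x = 1 := by rw [hind]; simp [hij, heq.symm]
      calc (1 : ℝ) = ind (j, i) x := this.symm
        _ ≤ ∑ p : Fin (n+1) × Fin (n+1), ind p x :=
            Finset.single_le_sum (fun p _ => hind0 p x) (Finset.mem_univ _)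
  -- bound for a fixed pair
  have pairbound : ∀ p : Fin (n+1) × Fin (n+1),
      ∑ x : Fin (n+1) → S, base x * ind p x ≤
        (if p.1 < p.2 then qf Q μ s (h - ((p.2 : ℕ) - (p.1 : ℕ)) * d) else 0) := by
    intro ⟨i, j⟩
    by_cases hij : i < j
    · simp only [hij, if_true]
      set m : ℕ := (j : ℕ) - (i : ℕ) with hm
      have hm1 : 1 ≤ m := by rw [hm]; have := Fin.lt_def.mp hij; omega
      have hmn : m ≤ n := by rw [hm]; have := j.isLt; omega
      have key : ∑ x : Fin (n+1) → S, base x * ind (i, j) x =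
          ∑ y, ∑ z, ∑ c, ∑ e, μ y * (R ^ (i : ℕ)) y z *
            ((R ^ ((j : ℕ) - (i : ℕ))) z c *
              ((if z = c then (1:ℝ) else 0) * ((R ^ (n - (j : ℕ))) c e * g e))) := by
        rw [← L3' R μ n i j (le_of_lt hij) (fun z c => if z = c then (1:ℝ) else 0) g]
        apply Finset.sum_congr rfl; intro x _
        rw [hbase, hind]; dsimp only
        by_cases hx : x i = x j
        · simp only [hij, hx, true_and, if_true]; ring
        · simp only [hij, hx, true_and, and_false, if_false]; ring
      rw [key]
      -- collapse c := z and bound the diagonal entry by 1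
      have collapse : ∀ y z : S,
          (∑ c, ∑ e, μ y * (R ^ (i : ℕ)) y z *
            ((R ^ m) z c * ((if z = c then (1:ℝ) else 0) * ((R ^ (n - (j : ℕ))) c e * g e))))
          = μ y * (R ^ (i : ℕ)) y z * ((R ^ m) z z *
              (∑ e, (R ^ (n - (j : ℕ))) z e * g e)) := by
        intro y z
        rw [Finset.sum_eq_single z]
        · rw [if_pos rfl]
          simp only [Finset.mul_sum]
          apply Finset.sum_congr rfl; intro e _; ring
        · intro c _ hc
          rw [if_neg (Ne.symm hc)]
          simp
        · intro hz; exact absurd (Finset.mem_univ z) hz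
      calc ∑ y, ∑ z, ∑ c, ∑ e, μ y * (R ^ (i : ℕ)) y z *
              ((R ^ ((j:ℕ) - (i:ℕ))) z c *
                ((if z = c then (1:ℝ) else 0) * ((R ^ (n - (j : ℕ))) c e * g e)))
          = ∑ y, ∑ z, μ y * (R ^ (i : ℕ)) y z * ((R ^ m) z z *
              (∑ e, (R ^ (n - (j : ℕ))) z e * g e)) := by
            apply Finset.sum_congr rfl; intro y _
            apply Finset.sum_congr rfl; intro z _
            exact collapse y z
        _ ≤ ∑ y, ∑ z, μ y * (R ^ (i : ℕ)) y z *
              (∑ e, (R ^ (n - (j : ℕ))) z e * g e) := by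
            apply Finset.sum_le_sum; intro y _
            apply Finset.sum_le_sum; intro z _
            apply mul_le_mul_of_nonneg_left
            · apply mul_le_of_le_one_left
              · exact Finset.sum_nonneg fun e _ =>
                  mul_nonneg (pow_nonneg_entry R hR0 _ z e) (hg0 e)
              · exact pow_entry_le_one R hR0 hR1 m z z
            · exact mul_nonneg (hμ y) (pow_nonneg_entry R hR0 _ y z)
        _ = qf Q μ s (h - m * d) := by
            unfold qf
            symm
            apply Finset.sum_congr rfl; intro y _
            have harith : (i : ℕ) * d + ((n - (j : ℕ)) * d + (h - n * d)) = h - m * d := by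
              have hij' := Fin.lt_def.mp hij
              have hjn := Nat.lt_succ_iff.mp j.isLt
              have h1 : m * d ≤ n * d := Nat.mul_le_mul_right d hmn
              have h2 : (i:ℕ) * d + (n - (j:ℕ)) * d + m * d = n * d := by
                have : (i:ℕ) + (n - (j:ℕ)) + m = n := by omega
                calc (i:ℕ) * d + (n - (j:ℕ)) * d + m * d = ((i:ℕ) + (n - (j:ℕ)) + m) * d := by
                      rw [Nat.add_mul, Nat.add_mul]
                  _ = n * d := by rw [this]
              omega
            calc μ y * (Q ^ (h - m * d)) y s
                = μ y * ((Q ^ ((i:ℕ) * d) * (Q ^ ((n - (j:ℕ)) * d) * Q ^ (h - n * d))) y s) := by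
                  rw [← pow_add, ← pow_add, harith]
              _ = ∑ z, μ y * (R ^ (i : ℕ)) y z * (∑ e, (R ^ (n - (j : ℕ))) z e * g e) := by
                  rw [Matrix.mul_apply, Finset.mul_sum, hRpow, hRpow]
                  apply Finset.sum_congr rfl; intro z _
                  rw [Matrix.mul_apply, Finset.mul_sum, Finset.mul_sum, Finset.mul_sum]
                  apply Finset.sum_congr rfl; intro e _
                  rw [hg]; ring
    · simp only [hij, if_false]
      have : ∀ x : Fin (n+1) → S, base x * ind (i, j) x = 0 := by
        intro x; rw [hind]; dsimp only; rw [if_neg (by tauto)]; ring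
      simp only [this]
      simp
  -- now combine
  have step1 : qf Q μ s h ≤ ∑ p : Fin (n+1) × Fin (n+1), ∑ x : Fin (n+1) → S, base x * ind p x := by
    rw [expA]
    calc univ.sum base = ∑ x : Fin (n+1) → S, base x := rfl
      _ ≤ ∑ x : Fin (n+1) → S, base x * (∑ p : Fin (n+1) × Fin (n+1), ind p x) := by
          apply Finset.sum_le_sum; intro x _
          nlinarith [hbase0 x, pigeon x]
      _ = ∑ x : Fin (n+1) → S, ∑ p : Fin (n+1) × Fin (n+1), base x * ind p x := by
          apply Finset.sum_congr rfl; intro x _; rw [Finset.mul_sum]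
      _ = ∑ p : Fin (n+1) × Fin (n+1), ∑ x : Fin (n+1) → S, base x * ind p x := Finset.sum_comm
  have step2 : (∑ p : Fin (n+1) × Fin (n+1), ∑ x : Fin (n+1) → S, base x * ind p x) ≤
      ∑ p : Fin (n+1) × Fin (n+1),
        (if p.1 < p.2 then qf Q μ s (h - ((p.2 : ℕ) - (p.1 : ℕ)) * d) else 0) :=
    Finset.sum_le_sum fun p _ => pairbound p
  have qf0 : ∀ m, 0 ≤ qf Q μ s (h - m * d) := fun m => qf_nonneg Q hQ0 μ hμ s _
  have step3 : (∑ p : Fin (n+1) × Fin (n+1),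
      (if p.1 < p.2 then qf Q μ s (h - ((p.2 : ℕ) - (p.1 : ℕ)) * d) else 0)) ≤
      (n : ℝ) * ∑ m ∈ Finset.Icc 1 n, qf Q μ s (h - m * d) := by
    rw [Finset.sum_ite, Finset.sum_const_zero, add_zero]
    set A : Finset (Fin (n+1) × Fin (n+1)) := Finset.filter (fun p => p.1 < p.2) Finset.univ
      with hA
    have hcomp := Finset.sum_comp (s := A) (fun m => qf Q μ s (h - m * d))
      (fun p => ((p.2 : ℕ) - (p.1 : ℕ)))
    rw [hcomp]
    have cardbound : ∀ m ∈ Finset.image (fun p : Fin (n+1) × Fin (n+1) =>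
        ((p.2 : ℕ) - (p.1 : ℕ))) A,
        (Finset.filter (fun p => ((p.2 : ℕ) - (p.1 : ℕ)) = m) A).card ≤ n := by
      intro m _
      have hcard2 : (Finset.filter (fun p => ((p.2 : ℕ) - (p.1 : ℕ)) = m) A).card ≤
          ((Finset.univ : Finset (Fin (n+1))).erase (Fin.last n)).card := by
        apply Finset.card_le_card_of_injOn (fun p => p.1)
        · intro p hp
          rw [Finset.mem_coe, Finset.mem_filter, hA, Finset.mem_filter] at hp
          obtain ⟨⟨_, hlt⟩, hm⟩ := hp
          apply Finset.mem_erase.mpr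
          constructor
          · intro hcon
            have h1 := Fin.lt_def.mp hlt
            have h2 := Nat.lt_succ_iff.mp p.2.isLt
            rw [show p.1 = Fin.last n from hcon] at h1
            simp [Fin.val_last] at h1
            omega
          · exact Finset.mem_univ _
        · intro p hp q hq hpq
          simp only [Finset.coe_filter] at hp hq
          obtain ⟨hpA, hpm⟩ := hp
          obtain ⟨hqA, hqm⟩ := hq
          rw [hA, Finset.mem_filter] at hpA hqA
          have hp2 : (p.2 : ℕ) = (p.1 : ℕ) + m := by
            have := Fin.lt_def.mp hpA.2; omega
          have hq2 : (q.2 : ℕ) = (q.1 : ℕ) + m := by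
            have := Fin.lt_def.mp hqA.2; omega
          have h1 : (p.1 : ℕ) = (q.1 : ℕ) := congrArg Fin.val hpq
          apply Prod.ext hpq
          apply Fin.ext
          omega
      have hcard3 : ((Finset.univ : Finset (Fin (n+1))).erase (Fin.last n)).card = n := by
        rw [Finset.card_erase_of_mem (Finset.mem_univ _), Finset.card_univ, Fintype.card_fin]
        omega
      omega
    calc ∑ m ∈ Finset.image (fun p : Fin (n+1) × Fin (n+1) => ((p.2:ℕ) - (p.1:ℕ))) A,
          (Finset.filter (fun p => ((p.2:ℕ) - (p.1:ℕ)) = m) A).card • qf Q μ s (h - m * d)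
        ≤ ∑ m ∈ Finset.image (fun p : Fin (n+1) × Fin (n+1) => ((p.2:ℕ) - (p.1:ℕ))) A,
          (n : ℝ) * qf Q μ s (h - m * d) := by
          apply Finset.sum_le_sum; intro m hm
          rw [nsmul_eq_mul]
          apply mul_le_mul_of_nonneg_right _ (qf0 m)
          exact_mod_cast cardbound m hm
      _ ≤ ∑ m ∈ Finset.Icc 1 n, (n : ℝ) * qf Q μ s (h - m * d) := by
          apply Finset.sum_le_sum_of_subset_of_nonneg
          · intro m hm
            rw [Finset.mem_image] at hm
            obtain ⟨p, hp, hpm⟩ := hm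
            rw [hA, Finset.mem_filter] at hp
            have h1 := Fin.lt_def.mp hp.2
            have h2 := Nat.lt_succ_iff.mp p.2.isLt
            rw [Finset.mem_Icc]
            omega
          · intro m _ _
            exact mul_nonneg (Nat.cast_nonneg n) (qf0 m)
      _ = (n : ℝ) * ∑ m ∈ Finset.Icc 1 n, qf Q μ s (h - m * d) := by
          rw [Finset.mul_sum]
  linarith

lemma sum_range_mul {M : Type*} [AddCommMonoid M] (f : ℕ → M) (a b : ℕ) :
    ∑ u ∈ Finset.range (a * b), f u = ∑ j ∈ Finset.range a, ∑ t ∈ Finset.range b, f (j * b + t) := by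
  induction a with
  | zero => simp
  | succ a ih =>
    rw [Nat.succ_mul, Finset.sum_range_add, ih, Finset.sum_range_succ]

lemma blocks (q : ℕ → ℝ) (hq : ∀ h, 0 ≤ q h) (n d T H : ℕ)
    (hn : 1 ≤ n) (hd : 1 ≤ d) (hnd : n * d ≤ T) (hTH : T ≤ H)
    (hHT : H ≤ T + (2 * n + 1) * d)
    (hstar : ∀ h, T ≤ h → q h ≤ (n : ℝ) * ∑ m ∈ Finset.Icc 1 n, q (h - m * d)) :
    ∑ h ∈ Finset.range H, q h ≤ ((1 + n : ℝ)) ^ (2 * n + 1) * ∑ h ∈ Finset.range T, q h := by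
  classical
  set base0 : ℕ := T - n * d with hbase0
  have hbase0T : base0 + n * d = T := by omega
  set W : ℕ → ℝ := fun j => ∑ t ∈ Finset.range d, q (base0 + j * d + t) with hW
  have hW0 : ∀ j, 0 ≤ W j := fun j => Finset.sum_nonneg fun t _ => hq _
  set Aa : ℕ → ℝ := fun j => ∑ i ∈ Finset.range (j + 1), W i with hAa
  have hAa0 : ∀ j, 0 ≤ Aa j := fun j => Finset.sum_nonneg fun i _ => hW0 i
  have Wrec : ∀ j, n ≤ j → W j ≤ (n : ℝ) * ∑ m ∈ Finset.Icc 1 n, W (j - m) := by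
    intro j hj
    have hper : ∀ t ∈ Finset.range d,
        q (base0 + j * d + t) ≤ (n : ℝ) * ∑ m ∈ Finset.Icc 1 n, q (base0 + (j - m) * d + t) := by
      intro t _
      have hT : T ≤ base0 + j * d + t := by
        have : n * d ≤ j * d := Nat.mul_le_mul_right d hj
        omega
      have := hstar (base0 + j * d + t) hT
      have heq : ∀ m ∈ Finset.Icc 1 n,
          base0 + j * d + t - m * d = base0 + (j - m) * d + t := by
        intro m hm
        rw [Finset.mem_Icc] at hm
        have h1 : m * d ≤ j * d := Nat.mul_le_mul_right d (le_trans hm.2 hj)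
        have h2 : (j - m) * d = j * d - m * d := Nat.sub_mul j m d
        omega
      calc q (base0 + j * d + t) ≤ (n : ℝ) * ∑ m ∈ Finset.Icc 1 n, q (base0 + j * d + t - m * d) := this
        _ = (n : ℝ) * ∑ m ∈ Finset.Icc 1 n, q (base0 + (j - m) * d + t) := by
            congr 1
            apply Finset.sum_congr rfl
            intro m hm
            rw [heq m hm]
    calc W j = ∑ t ∈ Finset.range d, q (base0 + j * d + t) := rfl
      _ ≤ ∑ t ∈ Finset.range d, (n : ℝ) * ∑ m ∈ Finset.Icc 1 n, q (base0 + (j - m) * d + t) :=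
          Finset.sum_le_sum hper
      _ = ∑ t ∈ Finset.range d, ∑ m ∈ Finset.Icc 1 n, (n : ℝ) * q (base0 + (j - m) * d + t) := by
          apply Finset.sum_congr rfl; intro t _; rw [Finset.mul_sum]
      _ = ∑ m ∈ Finset.Icc 1 n, ∑ t ∈ Finset.range d, (n : ℝ) * q (base0 + (j - m) * d + t) :=
          Finset.sum_comm
      _ = (n : ℝ) * ∑ m ∈ Finset.Icc 1 n, W (j - m) := by
          rw [Finset.mul_sum]
          apply Finset.sum_congr rfl; intro m _
          rw [hW]
          dsimp only
          rw [Finset.mul_sum]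
  have Asub : ∀ j, n ≤ j → ∑ m ∈ Finset.Icc 1 n, W (j - m) ≤ Aa (j - 1) := by
    intro j hj
    have hj1 : j - 1 + 1 = j := by omega
    have hAeq : Aa (j - 1) = ∑ i ∈ Finset.range j, W i := by rw [hAa]; dsimp only; rw [hj1]
    rw [hAeq]
    have himg : ∑ m ∈ Finset.Icc 1 n, W (j - m) =
        ∑ i ∈ (Finset.Icc 1 n).image (fun m => j - m), W i := by
      rw [Finset.sum_image]
      intro m1 h1 m2 h2 he
      rw [Finset.mem_coe, Finset.mem_Icc] at h1 h2
      have he' : j - m1 = j - m2 := he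
      omega
    rw [himg]
    apply Finset.sum_le_sum_of_subset_of_nonneg
    · intro i hi
      rw [Finset.mem_image] at hi
      obtain ⟨m, hm, hmi⟩ := hi
      rw [Finset.mem_Icc] at hm
      rw [Finset.mem_range]
      omega
    · intro i _ _; exact hW0 i
  have Arec : ∀ j, n ≤ j → Aa j ≤ (1 + n : ℝ) * Aa (j - 1) := by
    intro j hj
    have hj1 : j - 1 + 1 = j := by omega
    have : Aa j = Aa (j - 1) + W j := by
      rw [hAa]; dsimp only
      rw [show j + 1 = (j - 1 + 1) + 1 by omega, Finset.sum_range_succ, hj1]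
    rw [this]
    have := le_trans (Wrec j hj) (mul_le_mul_of_nonneg_left (Asub j hj) (Nat.cast_nonneg n))
    nlinarith [hAa0 (j - 1)]
  have Agrow : ∀ k, Aa (n - 1 + k) ≤ (1 + n : ℝ) ^ k * Aa (n - 1) := by
    intro k
    induction k with
    | zero => simp
    | succ k ih =>
      have hj : n ≤ n - 1 + (k + 1) := by omega
      have h1 : n - 1 + (k + 1) - 1 = n - 1 + k := by omega
      have h2 := Arec (n - 1 + (k + 1)) hj
      rw [h1] at h2
      calc Aa (n - 1 + (k + 1)) ≤ (1 + n : ℝ) * Aa (n - 1 + k) := h2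
        _ ≤ (1 + n : ℝ) * ((1 + n : ℝ) ^ k * Aa (n - 1)) := by
            apply mul_le_mul_of_nonneg_left ih
            positivity
        _ = (1 + n : ℝ) ^ (k + 1) * Aa (n - 1) := by ring
  have hG : Aa (n - 1) ≤ ∑ h ∈ Finset.range T, q h := by
    have h1 : Aa (n - 1) = ∑ u ∈ Finset.range (n * d), q (base0 + u) := by
      rw [hAa]; dsimp only
      have hnn : n - 1 + 1 = n := by omega
      rw [hnn, sum_range_mul (fun u => q (base0 + u)) n d]
      apply Finset.sum_congr rfl; intro j _
      rw [hW]; dsimp only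
      apply Finset.sum_congr rfl; intro t _
      congr 1
      omega
    rw [h1]
    have h2 : ∑ u ∈ Finset.range (n * d), q (base0 + u) = ∑ h ∈ Finset.Ico base0 T, q h := by
      rw [Finset.sum_Ico_eq_sum_range]
      have : T - base0 = n * d := by omega
      rw [this]
    rw [h2]
    have h3 : Finset.Ico base0 T ⊆ Finset.range T := by
      intro i hi
      rw [Finset.mem_Ico] at hi
      rw [Finset.mem_range]
      omega
    exact Finset.sum_le_sum_of_subset_of_nonneg h3 (fun i _ _ => hq i)
  have htail : ∑ h ∈ Finset.Ico T H, q h ≤ ((1 + n : ℝ) ^ (2 * n + 1) - 1) * Aa (n - 1) := by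
    have h1 : ∑ h ∈ Finset.Ico T H, q h ≤ ∑ h ∈ Finset.Ico T (T + (2 * n + 1) * d), q h := by
      apply Finset.sum_le_sum_of_subset_of_nonneg
      · intro i hi
        rw [Finset.mem_Ico] at hi ⊢
        omega
      · intro i _ _; exact hq i
    have h2 : ∑ h ∈ Finset.Ico T (T + (2 * n + 1) * d), q h =
        ∑ j ∈ Finset.range (2 * n + 1), W (n + j) := by
      rw [Finset.sum_Ico_eq_sum_range]
      have he : T + (2 * n + 1) * d - T = (2 * n + 1) * d := by omega
      rw [he, sum_range_mul (fun u => q (T + u)) (2 * n + 1) d]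
      apply Finset.sum_congr rfl; intro j _
      rw [hW]; dsimp only
      apply Finset.sum_congr rfl; intro t _
      congr 1
      have : (n + j) * d = n * d + j * d := Nat.add_mul n j d
      omega
    have h3 : Aa (n - 1 + (2 * n + 1)) = Aa (n - 1) + ∑ j ∈ Finset.range (2 * n + 1), W (n + j) := by
      rw [hAa]; dsimp only
      have he : n - 1 + (2 * n + 1) + 1 = n + (2 * n + 1) := by omega
      have he2 : n - 1 + 1 = n := by omega
      rw [he, Finset.sum_range_add, he2]
    have h4 := Agrow (2 * n + 1)
    have h5 : ∑ j ∈ Finset.range (2 * n + 1), W (n + j) ≤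
        ((1 + n : ℝ) ^ (2 * n + 1) - 1) * Aa (n - 1) := by
      nlinarith [hAa0 (n - 1)]
    calc ∑ h ∈ Finset.Ico T H, q h ≤ ∑ h ∈ Finset.Ico T (T + (2 * n + 1) * d), q h := h1
      _ = ∑ j ∈ Finset.range (2 * n + 1), W (n + j) := h2
      _ ≤ ((1 + n : ℝ) ^ (2 * n + 1) - 1) * Aa (n - 1) := h5
  have hsplit : ∑ h ∈ Finset.range H, q h =
      ∑ h ∈ Finset.range T, q h + ∑ h ∈ Finset.Ico T H, q h := by
    rw [Finset.range_eq_Ico, Finset.range_eq_Ico]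
    exact (Finset.sum_Ico_consecutive q (Nat.zero_le T) hTH).symm
  have hone : (1 : ℝ) ≤ (1 + n : ℝ) ^ (2 * n + 1) := by
    apply one_le_pow₀
    have : (0:ℝ) ≤ (n:ℝ) := Nat.cast_nonneg n
    linarith
  calc ∑ h ∈ Finset.range H, q h
      ≤ ∑ h ∈ Finset.range T, q h + ((1 + n : ℝ) ^ (2 * n + 1) - 1) * Aa (n - 1) := by
        rw [hsplit]; linarith [htail]
    _ ≤ ∑ h ∈ Finset.range T, q h + ((1 + n : ℝ) ^ (2 * n + 1) - 1) * ∑ h ∈ Finset.range T, q h := by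
        have := mul_le_mul_of_nonneg_left hG (by linarith : (0:ℝ) ≤ (1 + n : ℝ) ^ (2 * n + 1) - 1)
        linarith
    _ = (1 + n : ℝ) ^ (2 * n + 1) * ∑ h ∈ Finset.range T, q h := by ring

lemma pReach_succ (μ : S → ℝ) (Pc : S → S → ℝ) (L : ℕ) (s : S) :
    pReach μ Pc (L+1) s = ∑ y, pReach μ Pc L y * Pc y s := by
  classical
  unfold pReach
  rw [sum_snoc]
  have key : ∀ (T' : Fin L → S) (y : S),
      (fun f : ℕ → S => μ (f 0) * ∏ h ∈ Finset.range (L+1), Pc (f h) (f (h + 1)))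
        (fun n => if h : n < L + 1 then (Fin.snoc T' y : Fin (L+1) → S) ⟨n, h⟩ else s)
      = ((fun f : ℕ → S => μ (f 0) * ∏ h ∈ Finset.range L, Pc (f h) (f (h + 1)))
          (fun n => if h : n < L then T' ⟨n, h⟩ else y)) * Pc y s := by
    intro T' y
    dsimp only
    have hagree : ∀ (n : ℕ), n ≤ L →
        (if h : n < L + 1 then (Fin.snoc T' y : Fin (L+1) → S) ⟨n, h⟩ else s)
          = (if h : n < L then T' ⟨n, h⟩ else y) := by
      intro n hn
      by_cases hnL : n < L
      · rw [dif_pos (by omega : n < L + 1), dif_pos hnL]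
        have hcast : (⟨n, by omega⟩ : Fin (L+1)) = Fin.castSucc ⟨n, hnL⟩ := rfl
        rw [hcast, Fin.snoc_castSucc]
      · have hnL' : n = L := by omega
        subst hnL'
        rw [dif_pos (by omega : n < n + 1), dif_neg hnL]
        have hcast : (⟨n, by omega⟩ : Fin (n+1)) = Fin.last n := rfl
        rw [hcast, Fin.snoc_last]
    have hprod : (∏ h ∈ Finset.range L, Pc
          (if hh : h < L + 1 then (Fin.snoc T' y : Fin (L+1) → S) ⟨h, hh⟩ else s)
          (if hh : h + 1 < L + 1 then (Fin.snoc T' y : Fin (L+1) → S) ⟨h+1, hh⟩ else s))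
        = ∏ h ∈ Finset.range L, Pc
          (if hh : h < L then T' ⟨h, hh⟩ else y)
          (if hh : h + 1 < L then T' ⟨h+1, hh⟩ else y) := by
      apply Finset.prod_congr rfl
      intro h hh
      rw [Finset.mem_range] at hh
      rw [hagree h (by omega), hagree (h+1) (by omega)]
    rw [Finset.prod_range_succ, hprod, hagree 0 (by omega), hagree L (by omega)]
    rw [dif_neg (by omega : ¬ (L + 1 < L + 1)), dif_neg (by omega : ¬ (L < L))]
    ring
  simp only [key]
  rw [Finset.sum_comm]
  apply Finset.sum_congr rfl; intro y _
  rw [Finset.sum_mul]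

lemma pReach_matrix (μ : S → ℝ) (Pc : S → S → ℝ) (L : ℕ) (s : S) :
    pReach μ Pc L s = qf (Matrix.of Pc) μ s L := by
  classical
  induction L generalizing s with
  | zero =>
    unfold pReach qf
    rw [Fintype.sum_unique]
    simp [Matrix.one_apply, mul_ite, Finset.sum_ite_eq']
  | succ L ih =>
    rw [pReach_succ]
    unfold qf
    calc ∑ y, pReach μ Pc L y * Pc y s
        = ∑ y, (∑ z, μ z * ((Matrix.of Pc) ^ L) z y) * Pc y s := by
          apply Finset.sum_congr rfl; intro y _; rw [ih y]; rfl
      _ = ∑ y, ∑ z, μ z * ((Matrix.of Pc) ^ L) z y * Pc y s := by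
          apply Finset.sum_congr rfl; intro y _; rw [Finset.sum_mul]
      _ = ∑ z, ∑ y, μ z * ((Matrix.of Pc) ^ L) z y * Pc y s := Finset.sum_comm
      _ = ∑ z, μ z * ((Matrix.of Pc) ^ (L+1)) z s := by
          apply Finset.sum_congr rfl; intro z _
          rw [pow_succ, Matrix.mul_apply, Finset.mul_sum]
          apply Finset.sum_congr rfl; intro y _
          have : (Matrix.of Pc) y s = Pc y s := rfl
          rw [this]; ring

lemma constineq (n : ℕ) (hn : 2 ≤ n) : (1+n)^(2*n+1) ≤ 4 * n^(4*n) := by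
  rcases eq_or_lt_of_le hn with h2 | h3
  · subst h2
    norm_num
  · have hn3 : 3 ≤ n := h3
    have h1 : (1+n)^(2*n+1) ≤ (1+n)^(2*n+2) :=
      Nat.pow_le_pow_right (by omega) (by omega)
    have h2 : (1+n)^(2*n+2) = ((1+n)^2)^(n+1) := by
      rw [← pow_mul]
      congr 1 <;> omega
    have h3' : (1+n)^2 ≤ n^3 := by nlinarith
    have h4 : ((1+n)^2)^(n+1) ≤ (n^3)^(n+1) := Nat.pow_le_pow_left h3' (n+1)
    have h5 : (n^3)^(n+1) = n^(3*n+3) := by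
      rw [← pow_mul]
      congr 1 <;> omega
    have h6 : n^(3*n+3) ≤ n^(4*n) := Nat.pow_le_pow_right (by omega) (by omega)
    have h7 : n^(4*n) ≤ 4 * n^(4*n) := by omega
    omega

lemma qf_card_one (Q : Matrix S S ℝ) (hQ1 : ∀ y, ∑ z, Q y z = 1)
    (μ : S → ℝ) (s : S) (hcard : Fintype.card S = 1) (h : ℕ) :
    qf Q μ s h = μ s := by
  classical
  have huniv : (Finset.univ : Finset S) = {s} :=
    Finset.eq_singleton_iff_unique_mem.mpr ⟨Finset.mem_univ s, fun x _ => by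
      have h1 := Fintype.card_eq_one_iff.mp hcard
      obtain ⟨a, ha⟩ := h1
      rw [ha x, ha s]⟩
  have hrow := pow_row_sum Q hQ1 h s
  rw [huniv, Finset.sum_singleton] at hrow
  unfold qf
  rw [huniv, Finset.sum_singleton, hrow, mul_one]

lemma perstate (Q : Matrix S S ℝ) (hQ0 : ∀ y z, 0 ≤ Q y z) (hQ1 : ∀ y, ∑ z, Q y z = 1)
    (μ : S → ℝ) (hμ : ∀ y, 0 ≤ μ y) (s : S) (H : ℕ)
    (hcard1 : 1 ≤ Fintype.card S) (hH : 2 * Fintype.card S ≤ H) :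
    ∑ h ∈ Finset.range H, qf Q μ s h ≤
      (4 * (Fintype.card S : ℝ) ^ (4 * Fintype.card S)) *
        ∑ h ∈ Finset.range (H / 2), qf Q μ s h := by
  classical
  set n := Fintype.card S with hn
  set T := H / 2 with hT
  have hTn : n ≤ T := by omega
  have hTH : T ≤ H := by omega
  have hH2T : H ≤ 2 * T + 1 := by omega
  rcases eq_or_lt_of_le hcard1 with h1 | h2
  · -- n = 1
    have hc1 : Fintype.card S = 1 := h1.symm
    have hq : ∀ h, qf Q μ s h = μ s := fun h => qf_card_one Q hQ1 μ s hc1 h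
    have hL : ∑ h ∈ Finset.range H, qf Q μ s h = (H : ℝ) * μ s := by
      rw [Finset.sum_congr rfl (fun h _ => hq h), Finset.sum_const, Finset.card_range,
        nsmul_eq_mul]
    have hR : ∑ h ∈ Finset.range T, qf Q μ s h = (T : ℝ) * μ s := by
      rw [Finset.sum_congr rfl (fun h _ => hq h), Finset.sum_const, Finset.card_range,
        nsmul_eq_mul]
    rw [hL, hR, hn, hc1]
    have hHT4 : (H : ℝ) ≤ 4 * T := by
      have : H ≤ 4 * T := by omega
      exact_mod_cast this
    have hμs := hμ s
    push_cast
    nlinarith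
  · -- n ≥ 2
    have hn2 : 2 ≤ n := h2
    set d := T / n with hd
    have hn0 : 0 < n := by omega
    have hd1 : 1 ≤ d := (Nat.one_le_div_iff hn0).mpr hTn
    have hnd : n * d ≤ T := by
      rw [hd, Nat.mul_comm]
      exact Nat.div_mul_le_self T n
    have hHT : H ≤ T + (2 * n + 1) * d := by
      have hdm := Nat.div_add_mod T n
      have hr : T % n < n := Nat.mod_lt _ hn0
      have hrr : n * (T / n) + T % n = T := hdm
      have hnp : n ≤ n * d := Nat.le_mul_of_pos_right n hd1
      have hform : (2 * n + 1) * d = 2 * (n * d) + d := by ring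
      rw [hform]
      rw [hd] at hnp ⊢
      omega
    have hstar : ∀ h, T ≤ h → qf Q μ s h ≤
        (n : ℝ) * ∑ m ∈ Finset.Icc 1 n, qf Q μ s (h - m * d) := by
      intro h hh
      exact star Q hQ0 hQ1 μ hμ s n d hn.symm (by omega) hd1 h (le_trans hnd hh)
    have hblocks := blocks (fun h => qf Q μ s h) (fun h => qf_nonneg Q hQ0 μ hμ s h)
      n d T H (by omega) hd1 hnd hTH hHT hstar
    have hcast : ((1 + n : ℝ)) ^ (2 * n + 1) ≤ 4 * (n : ℝ) ^ (4 * n) := by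
      exact_mod_cast constineq n hn2
    have hsumT : 0 ≤ ∑ h ∈ Finset.range T, qf Q μ s h :=
      Finset.sum_nonneg fun h _ => qf_nonneg Q hQ0 μ hμ s h
    calc ∑ h ∈ Finset.range H, qf Q μ s h
        ≤ ((1 + n : ℝ)) ^ (2 * n + 1) * ∑ h ∈ Finset.range T, qf Q μ s h := hblocks
      _ ≤ (4 * (n : ℝ) ^ (4 * n)) * ∑ h ∈ Finset.range T, qf Q μ s h :=
          mul_le_mul_of_nonneg_right hcast hsumT

end Stmt5Aux

theorem stmt5 {S A : Type} [Fintype S]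
    (μ : S → ℝ) (P : S → A → S → ℝ) (Rmean : S → A → ℝ) (H : ℕ)
    (hμ0 : ∀ s, 0 ≤ μ s) (hμ1 : ∑ s, μ s = 1)
    (hP0 : ∀ s a s', 0 ≤ P s a s') (hP1 : ∀ s a, ∑ s', P s a s' = 1)
    (hR : ∀ s a, Rmean s a ∈ Set.Icc (0 : ℝ) 1)
    (π : S → A)
    (hH : 2 * Fintype.card S ≤ H) :
    (1 / (4 * (Fintype.card S : ℝ) ^ (4 * Fintype.card S))) *
        Vfin μ (fun s s' => P s (π s) s') (fun s => Rmean s (π s)) H ≤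
      Vfin μ (fun s s' => P s (π s) s') (fun s => Rmean s (π s)) (H / 2) := by
  classical
  by_cases hcard0 : Fintype.card S = 0
  · have : IsEmpty S := Fintype.card_eq_zero_iff.mp hcard0
    simp [Vfin]
  · have hcard1 : 1 ≤ Fintype.card S := by omega
    set C : ℝ := 4 * (Fintype.card S : ℝ) ^ (4 * Fintype.card S) with hC
    have hCpos : 0 < C := by
      rw [hC]
      have : (0:ℝ) < (Fintype.card S : ℝ) := by
        exact_mod_cast hcard1
      positivity
    set Pc : S → S → ℝ := fun s s' => P s (π s) s' with hPc
    set rc : S → ℝ := fun s => Rmean s (π s) with hrc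
    have hQ0 : ∀ y z, 0 ≤ (Matrix.of Pc) y z := fun y z => hP0 y (π y) z
    have hQ1 : ∀ y, ∑ z, (Matrix.of Pc) y z = 1 := fun y => hP1 y (π y)
    have hrc0 : ∀ s, 0 ≤ rc s := fun s => (hR s (π s)).1
    have hmain : Vfin μ Pc rc H ≤ C * Vfin μ Pc rc (H / 2) := by
      unfold Vfin
      rw [Finset.mul_sum]
      apply Finset.sum_le_sum
      intro s _
      have hps := Stmt5Aux.perstate (Matrix.of Pc) hQ0 hQ1 μ hμ0 s H hcard1 hH
      have hrw : ∀ L : ℕ, ∑ h ∈ Finset.range L, pReach μ Pc h s =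
          ∑ h ∈ Finset.range L, Stmt5Aux.qf (Matrix.of Pc) μ s h := by
        intro L
        exact Finset.sum_congr rfl fun h _ => Stmt5Aux.pReach_matrix μ Pc h s
      rw [hrw H, hrw (H / 2)]
      calc (∑ h ∈ Finset.range H, Stmt5Aux.qf (Matrix.of Pc) μ s h) * rc s
          ≤ (C * ∑ h ∈ Finset.range (H / 2), Stmt5Aux.qf (Matrix.of Pc) μ s h) * rc s := by
            apply mul_le_mul_of_nonneg_right _ (hrc0 s)
            rw [hC]
            exact hps
        _ = C * ((∑ h ∈ Finset.range (H / 2), Stmt5Aux.qf (Matrix.of Pc) μ s h) * rc s) := by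
            ring
    calc (1 / C) * Vfin μ Pc rc H ≤ (1 / C) * (C * Vfin μ Pc rc (H / 2)) := by
          apply mul_le_mul_of_nonneg_left hmain
          positivity
      _ = Vfin μ Pc rc (H / 2) := by
          field_simp
end
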